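/- Let p ≥ 1, ℓ ≥ 0, b₀ ≥ 1, w₀ ≥ 0 be integers, s₀ = b₀ + w₀ and δ = p/(p+ℓ). Let B_n be the number of black balls after n steps in the Young–Pólya urn of period p and parameter ℓ with initial composition (b₀, w₀). Then E[B_n] = b₀ · (Γ(s₀/(p+ℓ))/Γ((s₀+p)/(p+ℓ))) · (n/p)^δ · (1 + O(1/n)); that is, there is a constant C such that for all n ≥ 1, |E[B_n] − b₀ (Γ(s₀/(p+ℓ))/Γ((s₀+p)/(p+ℓ))) (n/p)^δ| ≤ C·n^{δ−1}. -/

import Mathlib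

open Real

/-- `urnMass p ℓ b₀ w₀ n b` is the probability that the Young–Pólya urn of period `p`
and parameter `ℓ` with initial composition `(b₀, w₀)` contains `b` black balls after `n`
steps (the total number of balls after `n` steps is `b₀ + w₀ + n + ℓ⌊n/p⌋`). -/
noncomputable def urnMass (p ℓ b₀ w₀ : ℕ) : ℕ → ℕ → ℝ
  | 0, b => if b = b₀ then 1 else 0
  | n + 1, b =>
    urnMass p ℓ b₀ w₀ n (b - 1) *
        (((b - 1 : ℕ) : ℝ) / ((b₀ + w₀ + n + ℓ * (n / p) : ℕ) : ℝ)) +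
      urnMass p ℓ b₀ w₀ n b *
        ((((b₀ + w₀ + n + ℓ * (n / p) : ℕ) : ℝ) - (b : ℝ)) / ((b₀ + w₀ + n + ℓ * (n / p) : ℕ) : ℝ))

open Filter Finset

/-- total number of balls after n steps -/
def urnS (p ℓ b₀ w₀ n : ℕ) : ℕ := b₀ + w₀ + n + ℓ * (n / p)

noncomputable def urnP (p ℓ b₀ w₀ : ℕ) (n : ℕ) : ℝ :=
  ∏ k ∈ Finset.range n, (((urnS p ℓ b₀ w₀ k : ℕ) : ℝ) + 1) / ((urnS p ℓ b₀ w₀ k : ℕ) : ℝ)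

lemma urnMass_eq_zero (p ℓ b₀ w₀ : ℕ) : ∀ n b, b₀ + n < b → urnMass p ℓ b₀ w₀ n b = 0 := by
  intro n
  induction n with
  | zero => intro b hb; simp only [urnMass]; rw [if_neg]; omega
  | succ n ih =>
    intro b hb
    rw [urnMass, ih (b-1) (by omega), ih b (by omega)]
    ring

lemma urnMean_eq (p ℓ b₀ w₀ : ℕ) (hb : 1 ≤ b₀) (n : ℕ) :
    (∑' b : ℕ, (b : ℝ) * urnMass p ℓ b₀ w₀ n b) = (b₀ : ℝ) * urnP p ℓ b₀ w₀ n := by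
  have key : ∀ n, (∑ b ∈ Finset.range (b₀ + n + 1), (b : ℝ) * urnMass p ℓ b₀ w₀ n b)
      = (b₀ : ℝ) * urnP p ℓ b₀ w₀ n := by
    intro n
    induction n with
    | zero =>
      simp only [urnP, Finset.range_zero, Finset.prod_empty, mul_one, urnMass]
      rw [Finset.sum_eq_single b₀]
      · simp
      · intro b _ hne; simp [hne]
      · intro h; exact absurd (Finset.mem_range.2 (by omega)) h
    | succ n ih =>
      set S : ℝ := ((b₀ + w₀ + n + ℓ * (n / p) : ℕ) : ℝ) with hSdef
      have hS : (0:ℝ) < S := by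
        have : (0:ℕ) < b₀ + w₀ + n + ℓ * (n / p) := by omega
        rw [hSdef]; exact_mod_cast this
      have hmass : urnMass p ℓ b₀ w₀ n (b₀+n+1) = 0 :=
        urnMass_eq_zero p ℓ b₀ w₀ n _ (by omega)
      have expand : ∀ b : ℕ, (b:ℝ) * urnMass p ℓ b₀ w₀ (n+1) b
          = (b:ℝ) * (urnMass p ℓ b₀ w₀ n (b-1) * (((b-1:ℕ):ℝ)/S))
            + (b:ℝ) * (urnMass p ℓ b₀ w₀ n b * ((S - (b:ℝ))/S)) := by
        intro b; rw [urnMass]; ring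
      rw [show b₀ + (n+1) + 1 = (b₀ + n + 1) + 1 by ring]
      rw [Finset.sum_congr rfl (fun b _ => expand b), Finset.sum_add_distrib]
      rw [Finset.sum_range_succ'
        (fun b => (b:ℝ) * (urnMass p ℓ b₀ w₀ n (b-1) * (((b-1:ℕ):ℝ)/S)))]
      rw [Finset.sum_range_succ
        (fun b => (b:ℝ) * (urnMass p ℓ b₀ w₀ n b * ((S - (b:ℝ))/S)))]
      simp only [Nat.add_sub_cancel, Nat.cast_zero, zero_mul, add_zero, hmass, mul_zero, zero_mul]
      rw [← Finset.sum_add_distrib]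
      have step : ∀ i ∈ Finset.range (b₀+n+1),
          (((i+1:ℕ)):ℝ) * (urnMass p ℓ b₀ w₀ n i * ((i:ℝ)/S))
            + (i:ℝ)*(urnMass p ℓ b₀ w₀ n i * ((S-(i:ℝ))/S))
          = ((i:ℝ) * urnMass p ℓ b₀ w₀ n i) * ((S+1)/S) := by
        intro i _; push_cast; field_simp; ring
      rw [Finset.sum_congr rfl step, ← Finset.sum_mul, ih]
      have : urnP p ℓ b₀ w₀ (n+1) = urnP p ℓ b₀ w₀ n * ((S+1)/S) := by
        rw [urnP, urnP, Finset.prod_range_succ]; rfl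
      rw [this]; ring
  rw [← key n]
  refine tsum_eq_sum ?_
  intro b hb
  simp only [Finset.mem_range, not_lt] at hb
  rw [urnMass_eq_zero p ℓ b₀ w₀ n b (by omega)]
  ring

lemma telescope_prod (a : ℝ) (ha : 0 < a) (m : ℕ) :
    ∏ i ∈ Finset.range m, (a + i + 1) / (a + i) = (a + m) / a := by
  induction m with
  | zero => simp [div_self (ne_of_gt ha)]
  | succ m ih =>
    rw [Finset.prod_range_succ, ih]
    have h1 : a + (m:ℝ) ≠ 0 := by positivity
    have h2 : a ≠ 0 := ne_of_gt ha
    push_cast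
    field_simp
    ring

lemma urnS_period (p ℓ b₀ w₀ : ℕ) (hp : 1 ≤ p) (m i : ℕ) (hi : i < p) :
    urnS p ℓ b₀ w₀ (m * p + i) = b₀ + w₀ + (m * p + i) + ℓ * m := by
  unfold urnS
  congr 2
  rw [Nat.mul_comm m p, Nat.mul_add_div (by omega), Nat.div_eq_of_lt hi]
  omega

lemma urnP_period (p ℓ b₀ w₀ : ℕ) (hp : 1 ≤ p) (hb : 1 ≤ b₀) (m : ℕ) :
    urnP p ℓ b₀ w₀ (m * p) =
      ∏ j ∈ Finset.range m,
        (((b₀ + w₀ + p : ℕ):ℝ) + ((p + ℓ : ℕ):ℝ) * j) / (((b₀ + w₀ : ℕ):ℝ) + ((p + ℓ : ℕ):ℝ) * j) := by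
  induction m with
  | zero => simp [urnP]
  | succ m ih =>
    have hmp : (m + 1) * p = m * p + p := by ring
    rw [hmp, urnP, Finset.prod_range_add, ← urnP, ih, Finset.prod_range_succ]
    congr 1
    set a : ℝ := ((b₀ + w₀ : ℕ):ℝ) + ((p + ℓ : ℕ):ℝ) * m with hadef
    have ha : 0 < a := by
      have h1 : (1:ℝ) ≤ ((b₀ + w₀ : ℕ):ℝ) := by exact_mod_cast (show 1 ≤ b₀ + w₀ by omega)
      have h2 : (0:ℝ) ≤ ((p + ℓ : ℕ):ℝ) * m := by positivity
      rw [hadef]; linarith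
    have key : ∀ x ∈ Finset.range p,
        (((urnS p ℓ b₀ w₀ (m*p+x) : ℕ):ℝ) + 1) / ((urnS p ℓ b₀ w₀ (m*p+x) : ℕ):ℝ)
          = (a + x + 1)/(a + x) := by
      intro x hx
      rw [urnS_period p ℓ b₀ w₀ hp m x (Finset.mem_range.1 hx), hadef]
      push_cast
      ring_nf
    rw [Finset.prod_congr rfl key, telescope_prod a ha p, hadef]
    push_cast
    ring_nf

noncomputable def urnU (p ℓ b₀ w₀ : ℕ) (n : ℕ) : ℝ :=
  urnP p ℓ b₀ w₀ n / ((n:ℝ)/(p:ℝ)) ^ ((p:ℝ)/((p:ℝ)+(ℓ:ℝ)))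

section analytic

variable {p ℓ b₀ w₀ : ℕ}

lemma urnS_ge (hb : 1 ≤ b₀) (n : ℕ) : (n:ℝ) + 1 ≤ ((urnS p ℓ b₀ w₀ n : ℕ):ℝ) := by
  have : n + 1 ≤ urnS p ℓ b₀ w₀ n := by unfold urnS; omega
  exact_mod_cast this

lemma urnS_pos (hb : 1 ≤ b₀) (n : ℕ) : (0:ℝ) < ((urnS p ℓ b₀ w₀ n : ℕ):ℝ) := by
  have h := urnS_ge (p := p) (ℓ := ℓ) (w₀ := w₀) hb n
  have : (0:ℝ) ≤ (n:ℝ) := Nat.cast_nonneg n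
  linarith

lemma urnP_pos (hb : 1 ≤ b₀) (n : ℕ) : 0 < urnP p ℓ b₀ w₀ n := by
  apply Finset.prod_pos
  intro k _
  have := urnS_pos (p := p) (ℓ := ℓ) (w₀ := w₀) hb k
  positivity

lemma delta_pos (hp : 1 ≤ p) : 0 < (p:ℝ)/((p:ℝ)+(ℓ:ℝ)) := by
  have h1 : (0:ℝ) < p := by exact_mod_cast hp
  have h2 : (0:ℝ) ≤ ℓ := Nat.cast_nonneg ℓ
  positivity

lemma delta_le_one (hp : 1 ≤ p) : (p:ℝ)/((p:ℝ)+(ℓ:ℝ)) ≤ 1 := by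
  have h1 : (0:ℝ) < p := by exact_mod_cast hp
  have h2 : (0:ℝ) ≤ ℓ := Nat.cast_nonneg ℓ
  rw [div_le_one (by linarith)]; linarith


lemma inv_S_est (hp : 1 ≤ p) (hb : 1 ≤ b₀) (n : ℕ) (hn : 1 ≤ n) :
    |1/((urnS p ℓ b₀ w₀ n : ℕ):ℝ) - ((p:ℝ)/((p:ℝ)+(ℓ:ℝ)))/n| ≤
      (((b₀+w₀:ℕ):ℝ) + (ℓ:ℝ))/(n:ℝ)^2 := by
  set S : ℝ := ((urnS p ℓ b₀ w₀ n : ℕ):ℝ) with hSdef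
  set q : ℝ := (p:ℝ)+(ℓ:ℝ) with hqdef
  have hnR : (1:ℝ) ≤ (n:ℝ) := by exact_mod_cast hn
  have hpR : (1:ℝ) ≤ (p:ℝ) := by exact_mod_cast hp
  have hq : (0:ℝ) < q := by have := Nat.cast_nonneg (α := ℝ) ℓ; rw [hqdef]; linarith
  have hS1 : (n:ℝ) + 1 ≤ S := urnS_ge hb n
  have hS : (0:ℝ) < S := by linarith
  have hmod : (n:ℝ) = (p:ℝ) * ((n/p : ℕ):ℝ) + ((n % p : ℕ):ℝ) := by
    exact_mod_cast (Nat.div_add_mod n p).symm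
  have hSval : S = ((b₀+w₀:ℕ):ℝ) + (n:ℝ) + (ℓ:ℝ) * ((n/p : ℕ):ℝ) := by
    rw [hSdef]; unfold urnS; push_cast; ring
  have hkey : q*(n:ℝ) - (p:ℝ)*S = (ℓ:ℝ)*((n % p : ℕ):ℝ) - (p:ℝ)*((b₀+w₀:ℕ):ℝ) := by
    rw [hSval, hqdef]
    nlinarith [hmod]
  have habs : |q*(n:ℝ) - (p:ℝ)*S| ≤ (p:ℝ)*(((b₀+w₀:ℕ):ℝ) + (ℓ:ℝ)) := by
    rw [hkey]
    have h1 : ((n % p : ℕ):ℝ) ≤ (p:ℝ) := by exact_mod_cast le_of_lt (Nat.mod_lt n (by omega))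
    have h2 : (0:ℝ) ≤ ((n % p : ℕ):ℝ) := Nat.cast_nonneg _
    have h3 : (0:ℝ) ≤ (ℓ:ℝ) := Nat.cast_nonneg _
    have h4 : (0:ℝ) ≤ ((b₀+w₀:ℕ):ℝ) := Nat.cast_nonneg _
    rw [abs_le]
    constructor <;> nlinarith
  have hrw : 1/S - ((p:ℝ)/q)/n = (q*(n:ℝ) - (p:ℝ)*S)/(q*(n:ℝ)*S) := by
    field_simp
  rw [hrw, abs_div, abs_of_pos (by positivity : (0:ℝ) < q*(n:ℝ)*S)]
  rw [div_le_div_iff₀ (by positivity) (by positivity)]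
  have hSn : (n:ℝ) ≤ S := by linarith
  have hge : (0:ℝ) ≤ ((b₀+w₀:ℕ):ℝ) + (ℓ:ℝ) := by positivity
  have hpq : (p:ℝ) ≤ q := by rw [hqdef]; have := Nat.cast_nonneg (α := ℝ) ℓ; linarith
  have h0 : (0:ℝ) ≤ |q*(n:ℝ) - (p:ℝ)*S| := abs_nonneg _
  have hsq : (n:ℝ)^2 ≤ (n:ℝ)*S := by nlinarith
  calc |q*(n:ℝ) - (p:ℝ)*S| * (n:ℝ)^2 ≤ ((p:ℝ)*(((b₀+w₀:ℕ):ℝ) + (ℓ:ℝ))) * ((n:ℝ)*S) :=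
        mul_le_mul habs hsq (by positivity) (by positivity)
    _ = (((b₀+w₀:ℕ):ℝ) + (ℓ:ℝ)) * ((p:ℝ)*((n:ℝ)*S)) := by ring
    _ ≤ (((b₀+w₀:ℕ):ℝ) + (ℓ:ℝ)) * (q*(n:ℝ)*S) := by
        apply mul_le_mul_of_nonneg_left _ hge
        rw [← mul_assoc]
        exact mul_le_mul_of_nonneg_right
          (mul_le_mul_of_nonneg_right hpq (Nat.cast_nonneg n)) (le_of_lt hS)

/-- quadratic Bernoulli estimate: for `x ≥ 0`, `0 < δ ≤ 1`, `|(1+x)^δ - (1+δx)| ≤ x²`. -/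
lemma bernoulli_est {x d : ℝ} (hx : 0 ≤ x) (hd0 : 0 ≤ d) (hd1 : d ≤ 1) :
    |(1+x) ^ d - (1 + d*x)| ≤ x^2 := by
  have h1x : (0:ℝ) < 1 + x := by linarith
  have hupper : (1+x) ^ d ≤ 1 + d*x :=
    rpow_one_add_le_one_add_mul_self (by linarith) hd0 hd1
  have hsplit : (1+x) ^ d * (1+x) ^ (1-d) = 1 + x := by
    rw [← Real.rpow_add h1x]
    simp
  have hb2 : (1+x) ^ (1-d) ≤ 1 + (1-d)*x :=
    rpow_one_add_le_one_add_mul_self (by linarith) (by linarith) (by linarith)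
  have hpos : (0:ℝ) < (1+x) ^ d := Real.rpow_pos_of_pos h1x d
  have hlow : 1 + d*x - x^2 ≤ (1+x) ^ d := by
    have h3 : 1 + x ≤ (1+x) ^ d * (1 + (1-d)*x) := by
      calc 1 + x = (1+x) ^ d * (1+x) ^ (1-d) := hsplit.symm
        _ ≤ (1+x) ^ d * (1 + (1-d)*x) := by
            exact mul_le_mul_of_nonneg_left hb2 (le_of_lt hpos)
    have h4 : (0:ℝ) ≤ 1 + (1-d)*x := by nlinarith
    nlinarith [h3, h4, sq_nonneg (x*(2*d-1)), sq_nonneg x,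
      mul_nonneg (sub_nonneg.2 hd1) (mul_nonneg (mul_nonneg hx hx) hx)]
  rw [abs_le]
  constructor <;> nlinarith

lemma ratio_est (hp : 1 ≤ p) (hb : 1 ≤ b₀) (n : ℕ) (hn : 1 ≤ n) :
    |(1 + 1/((urnS p ℓ b₀ w₀ n : ℕ):ℝ)) - (1 + 1/(n:ℝ)) ^ ((p:ℝ)/((p:ℝ)+(ℓ:ℝ)))| ≤
      (((b₀+w₀:ℕ):ℝ) + (ℓ:ℝ) + 1)/(n:ℝ)^2 := by
  set d : ℝ := (p:ℝ)/((p:ℝ)+(ℓ:ℝ)) with hddef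
  have hnR : (1:ℝ) ≤ (n:ℝ) := by exact_mod_cast hn
  have hx : (0:ℝ) ≤ 1/(n:ℝ) := by positivity
  have h1 := inv_S_est (ℓ := ℓ) (w₀ := w₀) hp hb n hn
  have h2 := bernoulli_est hx (le_of_lt (delta_pos (ℓ := ℓ) hp)) (delta_le_one (ℓ := ℓ) hp)
  rw [← hddef] at h2
  have hxsq : (1/(n:ℝ))^2 = 1/(n:ℝ)^2 := by
    rw [div_pow, one_pow]
  rw [hxsq] at h2
  have hdx : d * (1/(n:ℝ)) = d/(n:ℝ) := by ring
  rw [hdx] at h2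
  have tri : (1 + 1/((urnS p ℓ b₀ w₀ n : ℕ):ℝ)) - (1 + 1/(n:ℝ)) ^ d =
      (1/((urnS p ℓ b₀ w₀ n : ℕ):ℝ) - d/(n:ℝ)) - ((1 + 1/(n:ℝ)) ^ d - (1 + d/(n:ℝ))) := by
    ring
  rw [tri]
  calc |(1/((urnS p ℓ b₀ w₀ n : ℕ):ℝ) - d/(n:ℝ)) - ((1 + 1/(n:ℝ)) ^ d - (1 + d/(n:ℝ)))| ≤
      |1/((urnS p ℓ b₀ w₀ n : ℕ):ℝ) - d/(n:ℝ)| + |(1 + 1/(n:ℝ)) ^ d - (1 + d/(n:ℝ))| :=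
        abs_sub _ _
    _ ≤ (((b₀+w₀:ℕ):ℝ) + (ℓ:ℝ))/(n:ℝ)^2 + 1/(n:ℝ)^2 := add_le_add h1 h2
    _ = (((b₀+w₀:ℕ):ℝ) + (ℓ:ℝ) + 1)/(n:ℝ)^2 := by ring

lemma urnU_pos (hp : 1 ≤ p) (hb : 1 ≤ b₀) (n : ℕ) (hn : 1 ≤ n) :
    0 < urnU p ℓ b₀ w₀ n := by
  have h1 : (0:ℝ) < (n:ℝ)/(p:ℝ) := by
    have : (0:ℝ) < (n:ℝ) := by exact_mod_cast hn
    have : (0:ℝ) < (p:ℝ) := by exact_mod_cast hp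
    positivity
  exact div_pos (urnP_pos hb n) (Real.rpow_pos_of_pos h1 _)

lemma urnU_rec (hp : 1 ≤ p) (hb : 1 ≤ b₀) (n : ℕ) (hn : 1 ≤ n) :
    urnU p ℓ b₀ w₀ (n+1) = urnU p ℓ b₀ w₀ n *
      ((1 + 1/((urnS p ℓ b₀ w₀ n : ℕ):ℝ)) / (1 + 1/(n:ℝ)) ^ ((p:ℝ)/((p:ℝ)+(ℓ:ℝ)))) := by
  set d : ℝ := (p:ℝ)/((p:ℝ)+(ℓ:ℝ)) with hddef
  set S : ℝ := ((urnS p ℓ b₀ w₀ n : ℕ):ℝ) with hSdef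
  have hnR : (1:ℝ) ≤ (n:ℝ) := by exact_mod_cast hn
  have hn0 : (0:ℝ) < (n:ℝ) := by linarith
  have hpR : (0:ℝ) < (p:ℝ) := by exact_mod_cast hp
  have hS : (0:ℝ) < S := urnS_pos hb n
  have hP : urnP p ℓ b₀ w₀ (n+1) = urnP p ℓ b₀ w₀ n * ((S+1)/S) := by
    rw [urnP, Finset.prod_range_succ, ← urnP, ← hSdef]
  have hcast : ((n+1 : ℕ):ℝ) = (n:ℝ) + 1 := by push_cast; ring
  have hnp1 : (1:ℝ) + 1/(n:ℝ) = ((n:ℝ)+1)/(n:ℝ) := by field_simp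
  unfold urnU
  rw [hP, hcast, ← hddef, hnp1]
  rw [Real.div_rpow (by linarith) (le_of_lt hpR), Real.div_rpow (le_of_lt hn0) (le_of_lt hpR),
    Real.div_rpow (by linarith) (le_of_lt hn0)]
  have e1 : (0:ℝ) < ((n:ℝ)+1) ^ d := Real.rpow_pos_of_pos (by linarith) d
  have e2 : (0:ℝ) < (n:ℝ) ^ d := Real.rpow_pos_of_pos hn0 d
  have e3 : (0:ℝ) < (p:ℝ) ^ d := Real.rpow_pos_of_pos hpR d
  field_simp

lemma urnU_diff (hp : 1 ≤ p) (hb : 1 ≤ b₀) (n : ℕ) (hn : 1 ≤ n) :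
    |urnU p ℓ b₀ w₀ (n+1) - urnU p ℓ b₀ w₀ n| ≤
      urnU p ℓ b₀ w₀ n * ((((b₀+w₀:ℕ):ℝ) + (ℓ:ℝ) + 1)/(n:ℝ)^2) := by
  set d : ℝ := (p:ℝ)/((p:ℝ)+(ℓ:ℝ)) with hddef
  set S : ℝ := ((urnS p ℓ b₀ w₀ n : ℕ):ℝ) with hSdef
  have hnR : (1:ℝ) ≤ (n:ℝ) := by exact_mod_cast hn
  have hone : (1:ℝ) ≤ 1 + 1/(n:ℝ) := by
    have h0 : (0:ℝ) < 1/(n:ℝ) := by positivity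
    linarith
  have hT : (1:ℝ) ≤ (1 + 1/(n:ℝ)) ^ d :=
    Real.one_le_rpow hone (le_of_lt (delta_pos (ℓ := ℓ) hp))
  have hT0 : (0:ℝ) < (1 + 1/(n:ℝ)) ^ d := by linarith
  have hu := urnU_pos (ℓ := ℓ) (w₀ := w₀) hp hb n hn
  rw [urnU_rec hp hb n hn]
  have expand : urnU p ℓ b₀ w₀ n * ((1 + 1/S) / (1 + 1/(n:ℝ)) ^ d) - urnU p ℓ b₀ w₀ n
      = urnU p ℓ b₀ w₀ n * (((1 + 1/S) - (1 + 1/(n:ℝ)) ^ d) / (1 + 1/(n:ℝ)) ^ d) := by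
    field_simp
  rw [expand, abs_mul, abs_div, abs_of_pos hu, abs_of_pos hT0]
  apply mul_le_mul_of_nonneg_left _ (le_of_lt hu)
  calc |(1 + 1/S) - (1 + 1/(n:ℝ)) ^ d| / (1 + 1/(n:ℝ)) ^ d
      ≤ |(1 + 1/S) - (1 + 1/(n:ℝ)) ^ d| / 1 := by
        apply div_le_div_of_nonneg_left (abs_nonneg _) one_pos hT
    _ = |(1 + 1/S) - (1 + 1/(n:ℝ)) ^ d| := by rw [div_one]
    _ ≤ (((b₀+w₀:ℕ):ℝ) + (ℓ:ℝ) + 1)/(n:ℝ)^2 := ratio_est hp hb n hn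

noncomputable def urnc (ℓ b₀ w₀ : ℕ) : ℝ := ((b₀+w₀:ℕ):ℝ) + (ℓ:ℝ) + 1

noncomputable def urnUbd (p ℓ b₀ w₀ : ℕ) : ℝ :=
  urnU p ℓ b₀ w₀ 1 * Real.exp (2 * urnc ℓ b₀ w₀)

lemma urnc_pos (ℓ b₀ w₀ : ℕ) : 0 < urnc ℓ b₀ w₀ := by
  unfold urnc; positivity

lemma urnU_le (hp : 1 ≤ p) (hb : 1 ≤ b₀) (n : ℕ) (hn : 1 ≤ n) :
    urnU p ℓ b₀ w₀ n ≤ urnU p ℓ b₀ w₀ 1 * Real.exp (urnc ℓ b₀ w₀ * (2 - 2/(n:ℝ))) := by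
  set c : ℝ := urnc ℓ b₀ w₀ with hcdef
  have hc : 0 < c := urnc_pos ℓ b₀ w₀
  induction n, hn using Nat.le_induction with
  | base => simp
  | succ n hn ih =>
    have hnR : (1:ℝ) ≤ (n:ℝ) := by exact_mod_cast hn
    have hu := urnU_pos (ℓ := ℓ) (w₀ := w₀) hp hb n hn
    have hu1 := urnU_pos (ℓ := ℓ) (w₀ := w₀) hp hb 1 le_rfl
    have hdiff := urnU_diff (ℓ := ℓ) (w₀ := w₀) hp hb n hn
    have h1 : urnU p ℓ b₀ w₀ (n+1) ≤ urnU p ℓ b₀ w₀ n * (1 + c/(n:ℝ)^2) := by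
      have := abs_le.1 hdiff
      unfold c
      unfold urnc
      nlinarith [this.2]
    have h2 : (1:ℝ) + c/(n:ℝ)^2 ≤ Real.exp (c/(n:ℝ)^2) := by
      have := Real.add_one_le_exp (c/(n:ℝ)^2)
      linarith
    have h3 : urnU p ℓ b₀ w₀ (n+1) ≤
        (urnU p ℓ b₀ w₀ 1 * Real.exp (c * (2 - 2/(n:ℝ)))) * Real.exp (c/(n:ℝ)^2) := by
      calc urnU p ℓ b₀ w₀ (n+1) ≤ urnU p ℓ b₀ w₀ n * (1 + c/(n:ℝ)^2) := h1
        _ ≤ urnU p ℓ b₀ w₀ n * Real.exp (c/(n:ℝ)^2) :=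
            mul_le_mul_of_nonneg_left h2 (le_of_lt hu)
        _ ≤ (urnU p ℓ b₀ w₀ 1 * Real.exp (c * (2 - 2/(n:ℝ)))) * Real.exp (c/(n:ℝ)^2) :=
            mul_le_mul_of_nonneg_right ih (le_of_lt (Real.exp_pos _))
    refine h3.trans ?_
    rw [mul_assoc, ← Real.exp_add]
    apply mul_le_mul_of_nonneg_left _ (le_of_lt hu1)
    apply Real.exp_le_exp.2
    have hstep : 1/(n:ℝ)^2 ≤ 2/(n:ℝ) - 2/((n:ℝ)+1) := by
      rw [div_sub_div _ _ (by positivity) (by positivity : ((n:ℝ)+1) ≠ 0)]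
      rw [div_le_div_iff₀ (by positivity) (by positivity)]
      nlinarith
    have hcast : ((n+1:ℕ):ℝ) = (n:ℝ)+1 := by push_cast; ring
    rw [hcast]
    have hn0 : (0:ℝ) < (n:ℝ) := by linarith
    rw [← sub_nonneg]
    have key : c * (2 - 2 / ((n:ℝ) + 1)) - (c * (2 - 2 / (n:ℝ)) + c / (n:ℝ) ^ 2)
        = c * ((n:ℝ) - 1) / ((n:ℝ)^2 * ((n:ℝ)+1)) := by
      field_simp
      ring
    rw [key]
    exact div_nonneg (mul_nonneg hc.le (by linarith)) (by positivity)

lemma urnU_le_bd (hp : 1 ≤ p) (hb : 1 ≤ b₀) (n : ℕ) (hn : 1 ≤ n) :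
    urnU p ℓ b₀ w₀ n ≤ urnUbd p ℓ b₀ w₀ := by
  refine (urnU_le hp hb n hn).trans ?_
  unfold urnUbd
  apply mul_le_mul_of_nonneg_left _ (le_of_lt (urnU_pos hp hb 1 le_rfl))
  apply Real.exp_le_exp.2
  have hc : 0 < urnc ℓ b₀ w₀ := urnc_pos ℓ b₀ w₀
  have hnR : (1:ℝ) ≤ (n:ℝ) := by exact_mod_cast hn
  have : (0:ℝ) < 2/(n:ℝ) := by positivity
  nlinarith

lemma urnU_cauchy (hp : 1 ≤ p) (hb : 1 ≤ b₀) (n : ℕ) (hn : 1 ≤ n) :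
    ∀ m, n ≤ m → |urnU p ℓ b₀ w₀ m - urnU p ℓ b₀ w₀ n| ≤
      2*(urnUbd p ℓ b₀ w₀ * urnc ℓ b₀ w₀)*(1/(n:ℝ) - 1/(m:ℝ)) := by
  set D : ℝ := urnUbd p ℓ b₀ w₀ * urnc ℓ b₀ w₀ with hDdef
  have hD : 0 < D := by
    apply mul_pos _ (urnc_pos ℓ b₀ w₀)
    exact lt_of_lt_of_le (urnU_pos hp hb 1 le_rfl) (urnU_le_bd hp hb 1 le_rfl)
  intro m hm
  induction m, hm using Nat.le_induction with
  | base => simp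
  | succ m hm ih =>
    have hm1 : 1 ≤ m := le_trans hn hm
    have hmR : (1:ℝ) ≤ (m:ℝ) := by exact_mod_cast hm1
    have hdiff := urnU_diff (ℓ := ℓ) (w₀ := w₀) hp hb m hm1
    have hUb := urnU_le_bd (ℓ := ℓ) (w₀ := w₀) hp hb m hm1
    have hc : 0 < urnc ℓ b₀ w₀ := urnc_pos ℓ b₀ w₀
    have hd2 : |urnU p ℓ b₀ w₀ (m+1) - urnU p ℓ b₀ w₀ m| ≤ D/(m:ℝ)^2 := by
      refine hdiff.trans ?_
      rw [hDdef, mul_div_assoc]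
      exact mul_le_mul_of_nonneg_right hUb (by positivity)
    have hcast : ((m+1:ℕ):ℝ) = (m:ℝ)+1 := by push_cast; ring
    have htele : D/(m:ℝ)^2 ≤ 2*D*(1/(m:ℝ) - 1/((m:ℝ)+1)) := by
      have heq : 1/(m:ℝ) - 1/((m:ℝ)+1) = 1/((m:ℝ)*((m:ℝ)+1)) := by
        field_simp
        ring
      rw [heq, mul_one_div, div_le_div_iff₀ (by positivity) (by positivity)]
      nlinarith [mul_nonneg (mul_nonneg hD.le (by linarith : (0:ℝ) ≤ (m:ℝ))) (by linarith : (0:ℝ) ≤ (m:ℝ) - 1)]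
    calc |urnU p ℓ b₀ w₀ (m+1) - urnU p ℓ b₀ w₀ n|
        ≤ |urnU p ℓ b₀ w₀ (m+1) - urnU p ℓ b₀ w₀ m| + |urnU p ℓ b₀ w₀ m - urnU p ℓ b₀ w₀ n| := by
          have := abs_sub_le (urnU p ℓ b₀ w₀ (m+1)) (urnU p ℓ b₀ w₀ m) (urnU p ℓ b₀ w₀ n)
          linarith
      _ ≤ D/(m:ℝ)^2 + 2*D*(1/(n:ℝ) - 1/(m:ℝ)) := add_le_add hd2 ih
      _ ≤ 2*D*(1/(m:ℝ) - 1/((m:ℝ)+1)) + 2*D*(1/(n:ℝ) - 1/(m:ℝ)) := by linarith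
      _ = 2*D*(1/(n:ℝ) - 1/((m:ℝ)+1)) := by ring
      _ = 2*D*(1/(n:ℝ) - 1/(((m+1:ℕ)):ℝ)) := by rw [hcast]

lemma urnU_subseq (hp : 1 ≤ p) (hb : 1 ≤ b₀) :
    Filter.Tendsto (fun m => urnU p ℓ b₀ w₀ (m*p)) Filter.atTop
      (nhds (Real.Gamma (((b₀+w₀:ℕ):ℝ)/((p:ℝ)+(ℓ:ℝ))) /
        Real.Gamma ((((b₀+w₀:ℕ):ℝ)+(p:ℝ))/((p:ℝ)+(ℓ:ℝ))))) := by
  set q : ℝ := (p:ℝ)+(ℓ:ℝ) with hqdef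
  set β : ℝ := ((b₀+w₀:ℕ):ℝ)/q with hβdef
  set α : ℝ := (((b₀+w₀:ℕ):ℝ)+(p:ℝ))/q with hαdef
  have hpR : (1:ℝ) ≤ (p:ℝ) := by exact_mod_cast hp
  have hsR : (1:ℝ) ≤ ((b₀+w₀:ℕ):ℝ) := by exact_mod_cast (show 1 ≤ b₀+w₀ by omega)
  have hℓR : (0:ℝ) ≤ (ℓ:ℝ) := Nat.cast_nonneg ℓ
  have hq : (0:ℝ) < q := by rw [hqdef]; linarith
  have hβ : 0 < β := by rw [hβdef]; positivity
  have hα : 0 < α := by rw [hαdef]; positivity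
  have heq : ∀ m : ℕ, 1 ≤ m → urnU p ℓ b₀ w₀ (m*p) =
      (Real.GammaSeq β m / Real.GammaSeq α m) * ((β+(m:ℝ))/(α+(m:ℝ))) := by
    intro m hm
    have hmR : (1:ℝ) ≤ (m:ℝ) := by exact_mod_cast hm
    have hm0 : (0:ℝ) < (m:ℝ) := by linarith
    have hmp : (((m*p:ℕ)):ℝ)/(p:ℝ) = (m:ℝ) := by
      push_cast
      field_simp
    unfold urnU
    rw [hmp, urnP_period p ℓ b₀ w₀ hp hb m]
    have hfac : ∀ j ∈ Finset.range m,
        (((b₀+w₀+p:ℕ):ℝ) + ((p+ℓ:ℕ):ℝ)*(j:ℝ))/(((b₀+w₀:ℕ):ℝ) + ((p+ℓ:ℕ):ℝ)*(j:ℝ))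
          = (α+(j:ℝ))/(β+(j:ℝ)) := by
      intro j _
      have hj : (0:ℝ) ≤ (j:ℝ) := Nat.cast_nonneg j
      have hd1 : (0:ℝ) < ((b₀+w₀:ℕ):ℝ) + ((p+ℓ:ℕ):ℝ)*(j:ℝ) := by
        have : ((p+ℓ:ℕ):ℝ) = q := by rw [hqdef]; push_cast; ring
        rw [this]; positivity
      have hd2 : (0:ℝ) < β+(j:ℝ) := by positivity
      rw [div_eq_div_iff (ne_of_gt hd1) (ne_of_gt hd2)]
      rw [hαdef, hβdef, hqdef]
      push_cast
      field_simp
    rw [Finset.prod_congr rfl hfac, Finset.prod_div_distrib]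
    have hPα : (0:ℝ) < ∏ j ∈ Finset.range m, (α+(j:ℝ)) := by
      apply Finset.prod_pos; intro j _; have : (0:ℝ) ≤ (j:ℝ) := Nat.cast_nonneg j; positivity
    have hPβ : (0:ℝ) < ∏ j ∈ Finset.range m, (β+(j:ℝ)) := by
      apply Finset.prod_pos; intro j _; have : (0:ℝ) ≤ (j:ℝ) := Nat.cast_nonneg j; positivity
    have hδrw : (p:ℝ)/q = α - β := by
      rw [hαdef, hβdef]
      field_simp
      ring
    rw [Real.GammaSeq, Real.GammaSeq, Finset.prod_range_succ, Finset.prod_range_succ]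
    rw [hδrw, Real.rpow_sub hm0]
    have hfact : (0:ℝ) < ((Nat.factorial m : ℕ):ℝ) := by exact_mod_cast Nat.factorial_pos m
    have hrα : (0:ℝ) < (m:ℝ) ^ α := Real.rpow_pos_of_pos hm0 α
    have hrβ : (0:ℝ) < (m:ℝ) ^ β := Real.rpow_pos_of_pos hm0 β
    have hαm : (0:ℝ) < α + (m:ℝ) := by positivity
    have hβm : (0:ℝ) < β + (m:ℝ) := by positivity
    field_simp
  have h1 : Filter.Tendsto (fun m : ℕ => Real.GammaSeq β m / Real.GammaSeq α m)
      Filter.atTop (nhds (Real.Gamma β / Real.Gamma α)) :=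
    (Real.GammaSeq_tendsto_Gamma β).div (Real.GammaSeq_tendsto_Gamma α)
      (ne_of_gt (Real.Gamma_pos_of_pos hα))
  have h2 : Filter.Tendsto (fun m : ℕ => (β+(m:ℝ))/(α+(m:ℝ))) Filter.atTop (nhds 1) := by
    have hma : Filter.Tendsto (fun m : ℕ => α + (m:ℝ)) Filter.atTop Filter.atTop :=
      Filter.tendsto_atTop_add_const_left _ α tendsto_natCast_atTop_atTop
    have hm0 : Filter.Tendsto (fun m : ℕ => (α - β)/(α+(m:ℝ))) Filter.atTop (nhds 0) :=
      Filter.Tendsto.div_atTop tendsto_const_nhds hma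
    have hm1 : Filter.Tendsto (fun m : ℕ => 1 - (α - β)/(α+(m:ℝ))) Filter.atTop (nhds 1) := by
      have := hm0.const_sub 1
      simpa using this
    refine hm1.congr ?_
    intro m
    have hαm : (0:ℝ) < α + (m:ℝ) := by have : (0:ℝ) ≤ (m:ℝ) := Nat.cast_nonneg m; positivity
    field_simp
    ring
  have h3 := h1.mul h2
  rw [mul_one] at h3
  refine h3.congr' ?_
  filter_upwards [Filter.eventually_ge_atTop 1] with m hm
  exact (heq m hm).symm

end analytic

/-- **Theorem (asymptotics for the mean of Young–Pólya urns).**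
With `s₀ = b₀ + w₀` and `δ = p/(p+ℓ)`,
`E[Bₙ] = b₀ (Γ(s₀/(p+ℓ))/Γ((s₀+p)/(p+ℓ))) (n/p)^δ (1 + O(1/n))`. -/
theorem young_polya_urn_mean_asymptotics
    (p ℓ b₀ w₀ : ℕ) (hp : 1 ≤ p) (hb : 1 ≤ b₀) :
    ∃ C : ℝ, ∀ n : ℕ, 1 ≤ n →
      |(∑' b : ℕ, (b : ℝ) * urnMass p ℓ b₀ w₀ n b) -
          (b₀ : ℝ) *
            (Real.Gamma (((b₀ + w₀ : ℕ) : ℝ) / ((p : ℝ) + (ℓ : ℝ))) /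
              Real.Gamma ((((b₀ + w₀ : ℕ) : ℝ) + (p : ℝ)) / ((p : ℝ) + (ℓ : ℝ)))) *
            ((n : ℝ) / (p : ℝ)) ^ ((p : ℝ) / ((p : ℝ) + (ℓ : ℝ)))| ≤
        C * (n : ℝ) ^ ((p : ℝ) / ((p : ℝ) + (ℓ : ℝ)) - 1) := by
  set d : ℝ := (p:ℝ)/((p:ℝ)+(ℓ:ℝ)) with hddef
  set K : ℝ := Real.Gamma (((b₀ + w₀ : ℕ) : ℝ) / ((p : ℝ) + (ℓ : ℝ))) /
      Real.Gamma ((((b₀ + w₀ : ℕ) : ℝ) + (p : ℝ)) / ((p : ℝ) + (ℓ : ℝ))) with hKdef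
  set D : ℝ := 2*(urnUbd p ℓ b₀ w₀ * urnc ℓ b₀ w₀) with hDdef
  have hpR : (1:ℝ) ≤ (p:ℝ) := by exact_mod_cast hp
  have hp0 : (0:ℝ) < (p:ℝ) := by linarith
  have hD : 0 ≤ D := by
    rw [hDdef]
    have h1 := urnc_pos ℓ b₀ w₀
    have h2 := lt_of_lt_of_le (urnU_pos (ℓ := ℓ) (w₀ := w₀) hp hb 1 le_rfl)
      (urnU_le_bd (ℓ := ℓ) (w₀ := w₀) hp hb 1 le_rfl)
    positivity
  refine ⟨(b₀ : ℝ) * D / (p:ℝ) ^ d, ?_⟩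
  intro n hn
  have hnR : (1:ℝ) ≤ (n:ℝ) := by exact_mod_cast hn
  have hn0 : (0:ℝ) < (n:ℝ) := by linarith
  -- distance from urnU n to the limit K
  have hKn : |urnU p ℓ b₀ w₀ n - K| ≤ D/(n:ℝ) := by
    have htd : Filter.Tendsto (fun m => |urnU p ℓ b₀ w₀ n - urnU p ℓ b₀ w₀ (m*p)|)
        Filter.atTop (nhds |urnU p ℓ b₀ w₀ n - K|) :=
      (Filter.Tendsto.sub tendsto_const_nhds (urnU_subseq hp hb)).abs
    refine le_of_tendsto htd ?_
    filter_upwards [Filter.eventually_ge_atTop n] with m hm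
    have hmn : n ≤ m*p := le_trans hm (Nat.le_mul_of_pos_right m (by omega))
    have hc := urnU_cauchy (ℓ := ℓ) (w₀ := w₀) hp hb n hn (m*p) hmn
    rw [abs_sub_comm]
    refine hc.trans ?_
    rw [← hDdef]
    have hmp0 : (0:ℝ) < ((m*p:ℕ):ℝ) := by
      have : (1:ℝ) ≤ ((m*p:ℕ):ℝ) := by exact_mod_cast (by omega : 1 ≤ m*p)
      linarith
    have : (0:ℝ) ≤ 1/((m*p:ℕ):ℝ) := by positivity
    have hd1 : D*(1/(n:ℝ) - 1/((m*p:ℕ):ℝ)) ≤ D*(1/(n:ℝ)) :=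
      mul_le_mul_of_nonneg_left (by linarith) hD
    calc 2*(urnUbd p ℓ b₀ w₀ * urnc ℓ b₀ w₀)*(1/(n:ℝ) - 1/(((m*p:ℕ)):ℝ))
        = D*(1/(n:ℝ) - 1/((m*p:ℕ):ℝ)) := by rw [hDdef]
      _ ≤ D*(1/(n:ℝ)) := hd1
      _ = D/(n:ℝ) := by ring
  -- rewrite the mean
  rw [urnMean_eq p ℓ b₀ w₀ hb n]
  have hg : (0:ℝ) < ((n:ℝ)/(p:ℝ)) ^ d := Real.rpow_pos_of_pos (by positivity) d
  have hPU : urnP p ℓ b₀ w₀ n = urnU p ℓ b₀ w₀ n * ((n:ℝ)/(p:ℝ)) ^ d := by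
    unfold urnU
    rw [← hddef]
    field_simp
  rw [hPU]
  have key : (b₀:ℝ) * (urnU p ℓ b₀ w₀ n * ((n:ℝ)/(p:ℝ)) ^ d) - (b₀:ℝ) * K * ((n:ℝ)/(p:ℝ)) ^ d
      = (b₀:ℝ) * ((n:ℝ)/(p:ℝ)) ^ d * (urnU p ℓ b₀ w₀ n - K) := by ring
  rw [key, abs_mul]
  have hb0 : (0:ℝ) < (b₀:ℝ) := by exact_mod_cast hb
  rw [abs_of_pos (by positivity : (0:ℝ) < (b₀:ℝ) * ((n:ℝ)/(p:ℝ)) ^ d)]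
  calc (b₀:ℝ) * ((n:ℝ)/(p:ℝ)) ^ d * |urnU p ℓ b₀ w₀ n - K|
      ≤ (b₀:ℝ) * ((n:ℝ)/(p:ℝ)) ^ d * (D/(n:ℝ)) := by
        exact mul_le_mul_of_nonneg_left hKn (by positivity)
    _ = (b₀:ℝ) * D / (p:ℝ) ^ d * (n:ℝ) ^ (d - 1) := by
        rw [Real.div_rpow (le_of_lt hn0) (le_of_lt hp0),
          Real.rpow_sub hn0, Real.rpow_one]
        field_simp
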